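/- (Euler's formula) For every even integer n > 2, −((n+1)·B_n)/n! = Σ_{k=2}^{n−2} (B_k/k!)·(B_{n−k}/(n−k)!). -/

import Mathlib

open Finset
open PowerSeries

open scoped PowerSeries.derivative in
lemma derivative_exp_q : d⁄dX ℚ (exp ℚ) = exp ℚ := by
  ext n
  rw [PowerSeries.coeff_derivative, coeff_exp, coeff_exp]
  simp only [Algebra.algebraMap_self, RingHom.id_apply]
  rw [Nat.factorial_succ]
  push_cast
  field_simp


open scoped PowerSeries.derivative in
lemma key_ps : (bernoulliPowerSeries ℚ) ^ 2 =
    bernoulliPowerSeries ℚ - X * bernoulliPowerSeries ℚ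
      - X * d⁄dX ℚ (bernoulliPowerSeries ℚ) := by
  set B := bernoulliPowerSeries ℚ with hBdef
  have hB : B * (exp ℚ - 1) = X := bernoulliPowerSeries_mul_exp_sub_one ℚ
  have hD : B * exp ℚ + (exp ℚ - 1) * d⁄dX ℚ B = 1 := by
    have := congrArg (d⁄dX ℚ) hB
    rw [Derivation.leibniz, map_sub, derivative_exp_q, derivative_X] at this
    simpa [smul_eq_mul, mul_comm] using this
  have hBE : B * exp ℚ = X + B := by
    have : B * (exp ℚ - 1) + B = X + B := by rw [hB]
    linear_combination this
  have := congrArg (· * B) hD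
  simp only [add_mul, one_mul] at this
  -- B * exp * B + (exp-1)*dB*B = B
  have h2 : B ^ 2 * exp ℚ + X * d⁄dX ℚ B = B := by
    calc B ^ 2 * exp ℚ + X * d⁄dX ℚ B
        = B * exp ℚ * B + (exp ℚ - 1) * d⁄dX ℚ B * B := by rw [← hB]; ring
      _ = B := this
  have h3 : (X + B) * B + X * d⁄dX ℚ B = B := by
    calc (X + B) * B + X * d⁄dX ℚ B = B ^ 2 * exp ℚ + X * d⁄dX ℚ B := by rw [← hBE]; ring
      _ = B := h2
  linear_combination h3

/-- Euler's formula on Bernoulli numbers (convention B₁ = -1/2): for even `n > 2`,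
`-((n+1)·Bₙ)/n! = ∑_{k=2}^{n-2} (B_k/k!)·(B_{n-k}/(n-k)!)`. -/
theorem euler_formula (n : ℕ) (hn : 2 < n) (hne : Even n) :
    -(((n : ℚ) + 1) * bernoulli n) / n.factorial =
      ∑ k ∈ Finset.Icc 2 (n - 2),
        (bernoulli k / k.factorial) * (bernoulli (n - k) / (n - k).factorial) := by
  obtain ⟨m, rfl⟩ : ∃ m, n = m + 4 := by
    obtain ⟨r, hr⟩ := hne; exact ⟨n - 4, by omega⟩
  have hmeven : Even m := by
    rcases hne with ⟨r, hr⟩; exact ⟨r - 2, by omega⟩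
  set b : ℕ → ℚ := fun k => bernoulli k / k.factorial with hb
  have hcoeff : ∀ k, PowerSeries.coeff k (bernoulliPowerSeries ℚ) = b k := by
    intro k; simp [bernoulliPowerSeries, hb]
  have hb3 : b (m + 3) = 0 := by
    have : bernoulli (m + 3) = 0 := by
      rw [bernoulli_eq_bernoulli'_of_ne_one (by omega)]
      exact bernoulli'_eq_zero_of_odd (by rcases hmeven with ⟨r, hr⟩; exact ⟨r + 1, by omega⟩)
        (by omega)
    simp [hb, this]
  have hb0 : b 0 = 1 := by simp [hb]
  have hid := congrArg (PowerSeries.coeff (m + 4)) key_ps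
  rw [sq, PowerSeries.coeff_mul, Finset.Nat.sum_antidiagonal_eq_sum_range_succ_mk,
    map_sub, map_sub] at hid
  have hx1 : PowerSeries.coeff (m + 4) (PowerSeries.X * bernoulliPowerSeries ℚ)
      = b (m + 3) := by
    rw [show m + 4 = (m + 3) + 1 from rfl, PowerSeries.coeff_succ_X_mul, hcoeff]
  have hx2 : PowerSeries.coeff (m + 4)
      (PowerSeries.X * d⁄dX ℚ (bernoulliPowerSeries ℚ)) = b (m + 4) * (m + 4) := by
    rw [show m + 4 = (m + 3) + 1 from rfl, PowerSeries.coeff_succ_X_mul,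
      PowerSeries.coeff_derivative, hcoeff]
    push_cast; ring
  rw [hx1, hx2, hcoeff, hb3] at hid
  simp only [hcoeff] at hid
  -- split the sum
  rw [Finset.sum_range_succ, Finset.sum_range_succ, Finset.range_eq_Ico,
    Finset.sum_eq_sum_Ico_succ_bot (by omega : 0 < m + 3),
    Finset.sum_eq_sum_Ico_succ_bot (by omega : 1 < m + 3)] at hid
  have hIcc : Finset.Icc 2 (m + 4 - 2) = Finset.Ico 2 (m + 3) := by
    rw [show m + 4 - 2 = m + 2 from rfl, ← Finset.Ico_add_one_right_eq_Icc]
    rfl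
  rw [hIcc]
  have hS : ∀ k ∈ Finset.Ico 2 (m + 3),
      (bernoulli k / k.factorial) * (bernoulli (m + 4 - k) / (m + 4 - k).factorial)
        = b k * b (m + 4 - k) := fun k _ => rfl
  rw [Finset.sum_congr rfl hS]
  have e0 : b 0 * b (m + 4 - 0) = b (m + 4) := by rw [hb0]; norm_num
  have e1 : b 1 * b (m + 4 - 1) = 0 := by
    rw [show m + 4 - 1 = m + 3 from rfl, hb3, mul_zero]
  have e2 : b (m + 3) * b (m + 4 - (m + 3)) = 0 := by rw [hb3, zero_mul]
  have e3 : b (m + 4) * b (m + 4 - (m + 4)) = b (m + 4) := by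
    rw [Nat.sub_self, hb0, mul_one]
  rw [e0, e1, e2, e3] at hid
  have : (∑ k ∈ Finset.Ico 2 (m + 3), b k * b (m + 4 - k)) = -((m : ℚ) + 4 + 1) * b (m + 4) := by
    linear_combination hid
  rw [this, hb]
  push_cast
  ring
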